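/- Let n, N ≥ 1 and L, σ, ζ ≥ 0. Let f_1, …, f_n : ℝ^N → ℝ be differentiable and set f = (1/n)Σ_{i=1}^n f_i. Assume each ∇f_i is L-Lipschitz, and assume (1/n)Σ_{i=1}^n ‖∇f_i(y) − ∇f(y)‖² ≤ ζ² for all y ∈ ℝ^N. Let x_1, …, x_n ∈ ℝ^N and x̄ = (1/n)Σ_{i=1}^n x_i. Let μ be a probability measure on a measurable space Ω and let g_1, …, g_n : Ω → ℝ^N be square-integrable random vectors with ∫ ‖g_i(ω) − ∇f_i(x_i)‖² dμ(ω) ≤ σ² for each i. Then ∫ Σ_{i=1}^n ‖g_i(ω)‖² dμ(ω) ≤ 4nσ² + 4nζ² + 4L² Σ_{i=1}^n ‖x_i − x̄‖² + 4n‖∇f(x̄)‖². -/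

import Mathlib

open Finset MeasureTheory

theorem stmt_16 (n N : ℕ) (hn : 1 ≤ n) (hN : 1 ≤ N)
    (L σ ζ : ℝ) (hL : 0 ≤ L) (hσ : 0 ≤ σ) (hζ : 0 ≤ ζ)
    (f : Fin n → EuclideanSpace ℝ (Fin N) → ℝ)
    (hdiff : ∀ i, Differentiable ℝ (f i))
    (F : EuclideanSpace ℝ (Fin N) → ℝ)
    (hF : F = fun y => (1 / (n : ℝ)) * ∑ i, f i y)
    (hLip : ∀ i x y, ‖gradient (f i) x - gradient (f i) y‖ ≤ L * ‖x - y‖)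
    (hvar : ∀ y, (1 / (n : ℝ)) * ∑ i, ‖gradient (f i) y - gradient F y‖ ^ 2 ≤ ζ ^ 2)
    (x : Fin n → EuclideanSpace ℝ (Fin N))
    (xbar : EuclideanSpace ℝ (Fin N)) (hxbar : xbar = (1 / (n : ℝ)) • ∑ i, x i)
    {Ω : Type*} [MeasurableSpace Ω] (μ : Measure Ω) [IsProbabilityMeasure μ]
    (g : Fin n → Ω → EuclideanSpace ℝ (Fin N))
    (hg : ∀ i, MemLp (g i) 2 μ)
    (hgvar : ∀ i, ∫ ω, ‖g i ω - gradient (f i) (x i)‖ ^ 2 ∂μ ≤ σ ^ 2) :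
    ∫ ω, ∑ i, ‖g i ω‖ ^ 2 ∂μ ≤
      4 * n * σ ^ 2 + 4 * n * ζ ^ 2 + 4 * L ^ 2 * ∑ i, ‖x i - xbar‖ ^ 2 +
        4 * n * ‖gradient F xbar‖ ^ 2 := by
  have hn' : (0:ℝ) < n := by exact_mod_cast hn
  set a : Fin n → EuclideanSpace ℝ (Fin N) := fun i => gradient (f i) (x i) with ha
  set b : Fin n → EuclideanSpace ℝ (Fin N) := fun i => gradient (f i) xbar with hb
  set c : EuclideanSpace ℝ (Fin N) := gradient F xbar with hc
  have hint1 : ∀ i, Integrable (fun ω => ‖g i ω‖ ^ 2) μ := fun i =>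
    ((hg i).norm).integrable_sq
  have hint2 : ∀ i, Integrable (fun ω => ‖g i ω - a i‖ ^ 2) μ := fun i =>
    (((hg i).sub (memLp_const (a i))).norm).integrable_sq
  have hpt : ∀ i ω, ‖g i ω‖ ^ 2 ≤
      4 * ‖g i ω - a i‖ ^ 2 + (4 * ‖a i - b i‖ ^ 2 + 4 * ‖b i - c‖ ^ 2 + 4 * ‖c‖ ^ 2) := by
    intro i ω
    have h1 : ‖g i ω‖ ≤ ‖g i ω - a i‖ + ‖a i - b i‖ + ‖b i - c‖ + ‖c‖ := by
      have he : g i ω = (g i ω - a i) + (a i - b i) + ((b i - c) + c) := by abel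
      calc ‖g i ω‖ = ‖(g i ω - a i) + (a i - b i) + ((b i - c) + c)‖ := by rw [← he]
        _ ≤ ‖(g i ω - a i) + (a i - b i)‖ + ‖(b i - c) + c‖ := norm_add_le _ _
        _ ≤ ‖g i ω - a i‖ + ‖a i - b i‖ + (‖b i - c‖ + ‖c‖) := by
            gcongr <;> exact norm_add_le _ _
        _ = _ := by ring
    nlinarith [norm_nonneg (g i ω), norm_nonneg (g i ω - a i), norm_nonneg (a i - b i),
      norm_nonneg (b i - c), norm_nonneg c,
      sq_nonneg (‖g i ω - a i‖ - ‖a i - b i‖), sq_nonneg (‖g i ω - a i‖ - ‖b i - c‖),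
      sq_nonneg (‖g i ω - a i‖ - ‖c‖), sq_nonneg (‖a i - b i‖ - ‖b i - c‖),
      sq_nonneg (‖a i - b i‖ - ‖c‖), sq_nonneg (‖b i - c‖ - ‖c‖)]
  have hmono : ∫ ω, ∑ i, ‖g i ω‖ ^ 2 ∂μ ≤
      ∫ ω, ∑ i, (4 * ‖g i ω - a i‖ ^ 2 + (4 * ‖a i - b i‖ ^ 2 + 4 * ‖b i - c‖ ^ 2 + 4 * ‖c‖ ^ 2)) ∂μ := by
    refine integral_mono (integrable_finset_sum _ fun i _ => hint1 i)
      (integrable_finset_sum _ fun i _ => ((hint2 i).const_mul 4).add (integrable_const _))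
      fun ω => Finset.sum_le_sum fun i _ => hpt i ω
  have hsplit : ∫ ω, ∑ i, (4 * ‖g i ω - a i‖ ^ 2 + (4 * ‖a i - b i‖ ^ 2 + 4 * ‖b i - c‖ ^ 2 + 4 * ‖c‖ ^ 2)) ∂μ
      = ∑ i, (4 * ∫ ω, ‖g i ω - a i‖ ^ 2 ∂μ + (4 * ‖a i - b i‖ ^ 2 + 4 * ‖b i - c‖ ^ 2 + 4 * ‖c‖ ^ 2)) := by
    have hintc : ∀ i : Fin n, Integrable
        (fun ω => 4 * ‖g i ω - a i‖ ^ 2 + (4 * ‖a i - b i‖ ^ 2 + 4 * ‖b i - c‖ ^ 2 + 4 * ‖c‖ ^ 2)) μ :=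
      fun i => ((hint2 i).const_mul 4).add (integrable_const _)
    rw [integral_finset_sum _ fun i _ => hintc i]
    refine Finset.sum_congr rfl fun i _ => ?_
    rw [integral_add ((hint2 i).const_mul 4) (integrable_const _), integral_const_mul,
      integral_const, probReal_univ, one_smul]
  have h1 : ∑ i, (4 * ∫ ω, ‖g i ω - a i‖ ^ 2 ∂μ) ≤ 4 * n * σ ^ 2 := by
    calc ∑ i : Fin n, (4 * ∫ ω, ‖g i ω - a i‖ ^ 2 ∂μ) ≤ ∑ _i : Fin n, 4 * σ ^ 2 :=
          Finset.sum_le_sum fun i _ => by have := hgvar i; linarith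
      _ = 4 * n * σ ^ 2 := by simp [Finset.sum_const]; ring
  have h2 : ∑ i, (4 * ‖a i - b i‖ ^ 2) ≤ 4 * L ^ 2 * ∑ i, ‖x i - xbar‖ ^ 2 := by
    rw [Finset.mul_sum]
    refine Finset.sum_le_sum fun i _ => ?_
    have h := hLip i (x i) xbar
    have hsq : ‖a i - b i‖ ^ 2 ≤ (L * ‖x i - xbar‖) ^ 2 := by
      apply pow_le_pow_left₀ (norm_nonneg _) h
    nlinarith [norm_nonneg (x i - xbar)]
  have h3 : ∑ i, (4 * ‖b i - c‖ ^ 2) ≤ 4 * n * ζ ^ 2 := by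
    have h := hvar xbar
    have hS : ∑ i, ‖b i - c‖ ^ 2 ≤ (n : ℝ) * ζ ^ 2 := by
      have h2 := mul_le_mul_of_nonneg_left h hn'.le
      rw [← mul_assoc, mul_one_div, div_self hn'.ne', one_mul] at h2
      exact h2
    rw [← Finset.mul_sum]
    linarith
  have h4 : ∑ _i : Fin n, (4 * ‖c‖ ^ 2) = 4 * n * ‖c‖ ^ 2 := by
    simp [Finset.sum_const]; ring
  calc ∫ ω, ∑ i, ‖g i ω‖ ^ 2 ∂μ
      ≤ ∑ i, (4 * ∫ ω, ‖g i ω - a i‖ ^ 2 ∂μ + (4 * ‖a i - b i‖ ^ 2 + 4 * ‖b i - c‖ ^ 2 + 4 * ‖c‖ ^ 2)) := hmono.trans hsplit.le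
    _ = ∑ i, (4 * ∫ ω, ‖g i ω - a i‖ ^ 2 ∂μ) + (∑ i, 4 * ‖a i - b i‖ ^ 2 + ∑ i, 4 * ‖b i - c‖ ^ 2 + ∑ _i : Fin n, 4 * ‖c‖ ^ 2) := by
        rw [← Finset.sum_add_distrib]
        congr 1
        rw [← Finset.sum_add_distrib, ← Finset.sum_add_distrib]
    _ ≤ 4 * n * σ ^ 2 + (4 * L ^ 2 * ∑ i, ‖x i - xbar‖ ^ 2 + 4 * n * ζ ^ 2 + 4 * n * ‖c‖ ^ 2) := by
        rw [h4]; linarith [h1, h2, h3]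
    _ = _ := by ring
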